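/- Key Property of BEST Objectives (XOS case): Let (A, f, c) be a multi-agent contract instance with XOS f and A nonempty, let B ∈ (0,1] be a budget, and let φ be a BEST objective. Then Max-φ(B) ≤ 2·Max-Reward-Light(B) + max_{i∈A} φ({i}). -/

import Mathlib

open scoped BigOperators ENNReal
open Finset

/-- Marginal contribution of agent `i` to set `S`: `f_S(i) = f(S) - f(S \ {i})`. -/
noncomputable def marginal {α : Type*} [DecidableEq α] (f : Finset α → ℝ) (S : Finset α)
    (i : α) : ℝ :=
  f S - f (S.erase i)

/-- Payment needed to incentivize `S`, valued in `[0,∞]`, with the conventions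
`0/0 = 0` and `x/0 = ∞` for `x > 0` (these hold for ENNReal division). -/
noncomputable def payment {α : Type*} [DecidableEq α] (f : Finset α → ℝ) (c : α → ℝ)
    (S : Finset α) : ℝ≥0∞ :=
  ∑ i ∈ S, ENNReal.ofReal (c i) / ENNReal.ofReal (marginal f S i)

/-- The principal's profit from incentivizing `S`: `g(S) = (1 - p(S)) · f(S)`. -/
noncomputable def profit {α : Type*} [DecidableEq α] (f : Finset α → ℝ) (c : α → ℝ)
    (S : Finset α) : ℝ :=
  (1 - (payment f c S).toReal) * f S

/-- `f` is monotone. -/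
def IsMonotoneFn {α : Type*} (f : Finset α → ℝ) : Prop :=
  ∀ ⦃S T : Finset α⦄, S ⊆ T → f S ≤ f T

/-- `f` is subadditive. -/
def IsSubadditive {α : Type*} [DecidableEq α] (f : Finset α → ℝ) : Prop :=
  ∀ S T : Finset α, f (S ∪ T) ≤ f S + f T

/-- `f` is submodular (decreasing marginal values). -/
def IsSubmodular {α : Type*} [DecidableEq α] (f : Finset α → ℝ) : Prop :=
  ∀ ⦃S T : Finset α⦄, S ⊆ T → ∀ i ∉ T, f (insert i T) - f T ≤ f (insert i S) - f S

/-- `f` is additive. -/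
def IsAdditive {α : Type*} [DecidableEq α] (f : Finset α → ℝ) : Prop :=
  ∀ S : Finset α, f S = ∑ i ∈ S, f {i}

/-- `f` is XOS: a finite max of nonnegative additive functions. -/
def IsXOS {α : Type*} (f : Finset α → ℝ) : Prop :=
  ∃ (k : ℕ) (a : Fin (k + 1) → α → ℝ),
    (∀ j i, 0 ≤ a j i) ∧
    ∀ S : Finset α, f S = Finset.univ.sup' Finset.univ_nonempty (fun j => ∑ i ∈ S, a j i)

/-- Agent `i` is light: it can be incentivized with payment at most `1/2`. -/
def isLight {α : Type*} [DecidableEq α] (f : Finset α → ℝ) (c : α → ℝ) (i : α) : Prop :=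
  payment f c {i} ≤ ENNReal.ofReal (1 / 2)

/-- `S` is budget-feasible for budget `B`. -/
def feasible {α : Type*} [DecidableEq α] (f : Finset α → ℝ) (c : α → ℝ) (B : ℝ)
    (S : Finset α) : Prop :=
  payment f c S ≤ ENNReal.ofReal B

/-- `S` is a budget-feasible set of light agents. -/
def feasibleLight {α : Type*} [DecidableEq α] (f : Finset α → ℝ) (c : α → ℝ) (B : ℝ)
    (S : Finset α) : Prop :=
  (∀ i ∈ S, isLight f c i) ∧ payment f c S ≤ ENNReal.ofReal B

/-- The maximum (supremum) value of objective `φ` over sets satisfying `P`. -/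
noncomputable def maxVal {α : Type*} (φ : Finset α → ℝ) (P : Finset α → Prop) : ℝ :=
  sSup (φ '' {S | P S})

/-- `φ` is a BEST objective for the instance `(f, c)`: it is nonnegative, sandwiched between
profit and reward, and satisfies `φ(S) ≤ f(S \ {i}) + φ({i})` for `i ∈ S`. -/
def IsBEST {α : Type*} [DecidableEq α] (f : Finset α → ℝ) (c : α → ℝ)
    (φ : Finset α → ℝ) : Prop :=
  (∀ S, 0 ≤ φ S) ∧
  (∀ S, φ S ≤ f S) ∧
  (∀ S, payment f c S ≤ 1 → (1 - (payment f c S).toReal) * f S ≤ φ S) ∧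
  (∀ S, ∀ i ∈ S, φ S ≤ f (S.erase i) + φ {i})

/-- `φ` is a BEST objective for the instance `(f, c)` restricted to sets satisfying `P`. -/
def IsBESTOn {α : Type*} [DecidableEq α] (f : Finset α → ℝ) (c : α → ℝ)
    (P : Finset α → Prop) (φ : Finset α → ℝ) : Prop :=
  (∀ S, P S → 0 ≤ φ S) ∧
  (∀ S, P S → φ S ≤ f S) ∧
  (∀ S, P S → payment f c S ≤ 1 → (1 - (payment f c S).toReal) * f S ≤ φ S) ∧
  (∀ S, P S → ∀ i ∈ S, φ S ≤ f (S.erase i) + φ {i})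

lemma exists_clause {α : Type*} (f : Finset α → ℝ) (hxos : IsXOS f) (S : Finset α) :
    ∃ a' : α → ℝ, (∀ i, 0 ≤ a' i) ∧ (∑ i ∈ S, a' i) = f S ∧
      ∀ V : Finset α, (∑ i ∈ V, a' i) ≤ f V := by
  obtain ⟨k, a, hpos, hf⟩ := hxos
  obtain ⟨j, -, hj⟩ := Finset.exists_mem_eq_sup'
    (Finset.univ_nonempty : (Finset.univ : Finset (Fin (k+1))).Nonempty)
    (fun j => ∑ i ∈ S, a j i)
  refine ⟨a j, hpos j, by rw [hf S, hj], fun V => ?_⟩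
  rw [hf V]
  exact Finset.le_sup' (fun j => ∑ i ∈ V, a j i) (Finset.mem_univ j)

lemma trim_exists {α : Type*} [DecidableEq α] (f : Finset α → ℝ) (a' : α → ℝ)
    (U : Finset α) : ∃ T, T ⊆ U ∧ (∀ i ∈ T, a' i / 2 ≤ marginal f T i) ∧
      f U - f T ≤ (∑ i ∈ U \ T, a' i) / 2 := by
  induction U using Finset.strongInductionOn with
  | _ U ih =>
    by_cases hall : ∀ i ∈ U, a' i / 2 ≤ marginal f U i
    · refine ⟨U, Finset.Subset.refl U, hall, by simp⟩
    · push_neg at hall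
      obtain ⟨j, hjU, hjlt⟩ := hall
      obtain ⟨T, hT1, hT2, hT3⟩ := ih (U.erase j) (Finset.erase_ssubset hjU)
      have hjT : j ∉ T := fun hc => (Finset.mem_erase.mp (hT1 hc)).1 rfl
      refine ⟨T, hT1.trans (Finset.erase_subset _ _), hT2, ?_⟩
      have hset : U \ T = insert j (U.erase j \ T) := by
        ext x
        simp only [Finset.mem_sdiff, Finset.mem_insert, Finset.mem_erase]
        constructor
        · rintro ⟨hxU, hxT⟩
          by_cases hxj : x = j
          · exact Or.inl hxj
          · exact Or.inr ⟨⟨hxj, hxU⟩, hxT⟩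
        · rintro (rfl | ⟨⟨hxj, hxU⟩, hxT⟩)
          · exact ⟨hjU, hjT⟩
          · exact ⟨hxU, hxT⟩
      have hnot : j ∉ U.erase j \ T := by simp
      rw [hset, Finset.sum_insert hnot]
      have hm : f U - f (U.erase j) < a' j / 2 := by simpa [marginal] using hjlt
      linarith

lemma div_term_le {c m a : ℝ} (hc : 0 ≤ c) (ha : 0 ≤ a) (hm : a / 2 ≤ m) :
    ENNReal.ofReal c / ENNReal.ofReal m ≤ 2 * (ENNReal.ofReal c / ENNReal.ofReal a) := by
  rcases eq_or_lt_of_le hc with hc0 | hc0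
  · simp [← hc0]
  rcases eq_or_lt_of_le ha with ha0 | ha0
  · rw [← ha0, ENNReal.ofReal_zero,
      ENNReal.div_zero (by simpa using (ENNReal.ofReal_pos.mpr hc0).ne')]
    simp
  · have hm0 : 0 < m := lt_of_lt_of_le (by linarith) hm
    rw [← ENNReal.ofReal_div_of_pos hm0, ← ENNReal.ofReal_div_of_pos ha0,
      show (2:ℝ≥0∞) = ENNReal.ofReal 2 by simp, ← ENNReal.ofReal_mul (by norm_num)]
    apply ENNReal.ofReal_le_ofReal
    rw [div_le_iff₀ hm0, show 2 * (c/a) * m = c * (2*m/a) by ring]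
    exact le_mul_of_one_le_right hc0.le (by rw [le_div_iff₀ ha0]; linarith)

/-- **Key Property of BEST Objectives (XOS case).** -/
theorem best_key_property_xos {α : Type*} [DecidableEq α] [Fintype α] [Nonempty α]
    (f : Finset α → ℝ) (c : α → ℝ) (φ : Finset α → ℝ)
    (hf01 : ∀ S, f S ∈ Set.Icc (0 : ℝ) 1) (hf0 : f ∅ = 0)
    (hxos : IsXOS f) (hc : ∀ i, 0 ≤ c i)
    (hφ : IsBEST f c φ)
    (B : ℝ) (hB0 : 0 < B) (hB1 : B ≤ 1) :
    maxVal φ (feasible f c B) ≤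
      2 * maxVal f (feasibleLight f c B) + ⨆ i : α, φ {i} := by
  classical
  obtain ⟨hφ0, hφf, hφprofit, hφrem⟩ := hφ
  have hBdd : BddAbove (f '' {S | feasibleLight f c B S}) := by
    refine ⟨1, ?_⟩
    rintro x ⟨V, -, rfl⟩
    exact (hf01 V).2
  have hM0 : (0:ℝ) ≤ maxVal f (feasibleLight f c B) := by
    have hmem : f ∅ ∈ f '' {S | feasibleLight f c B S} := by
      refine ⟨∅, ⟨fun i hi => absurd hi (Finset.notMem_empty i), ?_⟩, rfl⟩
      simp [payment]
    have := le_csSup hBdd hmem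
    rw [hf0] at this
    exact this
  have hsupBdd : BddAbove (Set.range fun i : α => φ {i}) :=
    Set.Finite.bddAbove (Set.finite_range _)
  have hsup0 : (0:ℝ) ≤ ⨆ i : α, φ {i} :=
    le_trans (hφ0 {Classical.arbitrary α}) (le_ciSup hsupBdd (Classical.arbitrary α))
  refine Real.sSup_le ?_ (by linarith)
  rintro x ⟨S, hSfeas, rfl⟩
  have hSfeas' : payment f c S ≤ ENNReal.ofReal B := hSfeas
  by_cases hall : ∀ i ∈ S, isLight f c i
  · have h1 : f S ≤ maxVal f (feasibleLight f c B) :=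
      le_csSup hBdd ⟨S, ⟨hall, hSfeas'⟩, rfl⟩
    have h2 := hφf S
    linarith
  · push_neg at hall
    obtain ⟨h, hhS, hheavy⟩ := hall
    -- supporting clause at S
    obtain ⟨a', ha'0, ha'S, ha'le⟩ := exists_clause f hxos S
    have hmarg_le : ∀ j ∈ S, marginal f S j ≤ a' j := by
      intro j hj
      have h1 : ∑ i ∈ S.erase j, a' i ≤ f (S.erase j) := ha'le _
      have h2 : ∑ i ∈ S.erase j, a' i + a' j = ∑ i ∈ S, a' i :=
        Finset.sum_erase_add _ _ hj
      have : marginal f S j = f S - f (S.erase j) := rfl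
      rw [this]
      linarith [ha'S]
    have ha'single : ∀ j, a' j ≤ f {j} := by
      intro j
      have := ha'le {j}
      simpa using this
    have hmargS_single : ∀ j ∈ S, marginal f S j ≤ f {j} :=
      fun j hj => (hmarg_le j hj).trans (ha'single j)
    -- heavy term bound
    have hterm : ∀ j ∈ S, ¬ isLight f c j →
        ENNReal.ofReal (1/2) < ENNReal.ofReal (c j) / ENNReal.ofReal (marginal f S j) := by
      intro j hjS hj
      have hpay : payment f c {j} = ENNReal.ofReal (c j) / ENNReal.ofReal (f {j}) := by
        simp [payment, marginal, Finset.erase_singleton, hf0]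
      have hlt : ENNReal.ofReal (1/2) < payment f c {j} := not_le.mp hj
      refine hlt.trans_le ?_
      rw [hpay]
      exact ENNReal.div_le_div_left
        (ENNReal.ofReal_le_ofReal (hmargS_single j hjS)) _
    -- all agents besides h are light
    have hlight : ∀ i ∈ S.erase h, isLight f c i := by
      intro i hi
      by_contra hih
      obtain ⟨hine, hiS⟩ := Finset.mem_erase.mp hi
      have hh' := hterm h hhS hheavy
      have hi' := hterm i hiS hih
      have hpair : ({h, i} : Finset α) ⊆ S := by
        intro x hx
        rcases Finset.mem_insert.mp hx with rfl | hx
        · exact hhS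
        · rw [Finset.mem_singleton.mp hx]; exact hiS
      have hsum : (∑ j ∈ ({h, i} : Finset α),
          ENNReal.ofReal (c j) / ENNReal.ofReal (marginal f S j)) ≤ payment f c S :=
        Finset.sum_le_sum_of_subset hpair
      rw [Finset.sum_pair (Ne.symm hine)] at hsum
      have hBle : payment f c S ≤ ENNReal.ofReal 1 :=
        le_trans hSfeas' (ENNReal.ofReal_le_ofReal hB1)
      have hhalf : ENNReal.ofReal 1 = ENNReal.ofReal (1/2) + ENNReal.ofReal (1/2) := by
        rw [← ENNReal.ofReal_add (by norm_num) (by norm_num)]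
        norm_num
      have hlt2 : ENNReal.ofReal (1/2) + ENNReal.ofReal (1/2) <
          ENNReal.ofReal (c h) / ENNReal.ofReal (marginal f S h) +
          ENNReal.ofReal (c i) / ENNReal.ofReal (marginal f S i) :=
        ENNReal.add_lt_add hh' hi'
      have : ENNReal.ofReal 1 < ENNReal.ofReal 1 := by
        calc ENNReal.ofReal 1 = ENNReal.ofReal (1/2) + ENNReal.ofReal (1/2) := hhalf
        _ < _ := hlt2
        _ ≤ payment f c S := hsum
        _ ≤ ENNReal.ofReal 1 := hBle
      exact lt_irrefl _ this
    -- trimming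
    obtain ⟨T, hTU, hTm, hTval⟩ := trim_exists f a' (S.erase h)
    have hTS : T ⊆ S := hTU.trans (Finset.erase_subset _ _)
    -- value bound : f (S.erase h) ≤ 2 * f T
    have hUa : ∑ i ∈ S.erase h, a' i ≤ f (S.erase h) := ha'le _
    have hsd : ∑ i ∈ S.erase h \ T, a' i ≤ ∑ i ∈ S.erase h, a' i :=
      Finset.sum_le_sum_of_subset_of_nonneg (Finset.sdiff_subset) (fun i _ _ => ha'0 i)
    have hval : f (S.erase h) ≤ 2 * f T := by linarith
    -- payment bound for T
    have hbudget : 2 * (∑ i ∈ S.erase h,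
        ENNReal.ofReal (c i) / ENNReal.ofReal (marginal f S i)) ≤ ENNReal.ofReal B := by
      have hsplit : (∑ i ∈ S.erase h, ENNReal.ofReal (c i) / ENNReal.ofReal (marginal f S i))
          + ENNReal.ofReal (c h) / ENNReal.ofReal (marginal f S h) = payment f c S :=
        Finset.sum_erase_add _ _ hhS
      have hhterm : ENNReal.ofReal (1/2) ≤
          ENNReal.ofReal (c h) / ENNReal.ofReal (marginal f S h) := (hterm h hhS hheavy).le
      have key : 2 * (∑ i ∈ S.erase h, ENNReal.ofReal (c i) / ENNReal.ofReal (marginal f S i))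
          + ENNReal.ofReal B ≤ ENNReal.ofReal B + ENNReal.ofReal B := by
        calc 2 * (∑ i ∈ S.erase h, ENNReal.ofReal (c i) / ENNReal.ofReal (marginal f S i))
            + ENNReal.ofReal B
            ≤ 2 * (∑ i ∈ S.erase h, ENNReal.ofReal (c i) / ENNReal.ofReal (marginal f S i))
            + 2 * (ENNReal.ofReal (c h) / ENNReal.ofReal (marginal f S h)) := by
              refine add_le_add_right ?_ _
              calc ENNReal.ofReal B ≤ ENNReal.ofReal 1 := ENNReal.ofReal_le_ofReal hB1
              _ = ENNReal.ofReal (1/2) + ENNReal.ofReal (1/2) := by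
                  rw [← ENNReal.ofReal_add (by norm_num) (by norm_num)]; norm_num
              _ ≤ ENNReal.ofReal (c h) / ENNReal.ofReal (marginal f S h)
                  + ENNReal.ofReal (c h) / ENNReal.ofReal (marginal f S h) :=
                    add_le_add hhterm hhterm
              _ = 2 * (ENNReal.ofReal (c h) / ENNReal.ofReal (marginal f S h)) :=
                    (two_mul _).symm
        _ = 2 * ((∑ i ∈ S.erase h, ENNReal.ofReal (c i) / ENNReal.ofReal (marginal f S i))
            + ENNReal.ofReal (c h) / ENNReal.ofReal (marginal f S h)) := by ring
        _ = 2 * payment f c S := by rw [hsplit]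
        _ ≤ 2 * ENNReal.ofReal B := mul_le_mul_right hSfeas' 2
        _ = ENNReal.ofReal B + ENNReal.ofReal B := two_mul _
      exact (ENNReal.add_le_add_iff_right ENNReal.ofReal_ne_top).mp key
    have hpT : payment f c T ≤ ENNReal.ofReal B := by
      have step1 : payment f c T ≤
          ∑ i ∈ T, 2 * (ENNReal.ofReal (c i) / ENNReal.ofReal (a' i)) :=
        Finset.sum_le_sum (fun i hi => div_term_le (hc i) (ha'0 i) (hTm i hi))
      have step2 : (∑ i ∈ T, ENNReal.ofReal (c i) / ENNReal.ofReal (a' i)) ≤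
          ∑ i ∈ T, ENNReal.ofReal (c i) / ENNReal.ofReal (marginal f S i) :=
        Finset.sum_le_sum (fun i hi => ENNReal.div_le_div_left
          (ENNReal.ofReal_le_ofReal (hmarg_le i (hTS hi))) _)
      calc payment f c T
          ≤ ∑ i ∈ T, 2 * (ENNReal.ofReal (c i) / ENNReal.ofReal (a' i)) := step1
      _ = 2 * ∑ i ∈ T, ENNReal.ofReal (c i) / ENNReal.ofReal (a' i) := by
            rw [Finset.mul_sum]
      _ ≤ 2 * ∑ i ∈ T, ENNReal.ofReal (c i) / ENNReal.ofReal (marginal f S i) :=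
            mul_le_mul_right step2 2
      _ ≤ 2 * ∑ i ∈ S.erase h, ENNReal.ofReal (c i) / ENNReal.ofReal (marginal f S i) :=
            mul_le_mul_right (Finset.sum_le_sum_of_subset hTU) 2
      _ ≤ ENNReal.ofReal B := hbudget
    -- conclude
    have hfT : f T ≤ maxVal f (feasibleLight f c B) :=
      le_csSup hBdd ⟨T, ⟨fun i hi => hlight i (hTU hi), hpT⟩, rfl⟩
    have h1 : φ S ≤ f (S.erase h) + φ {h} := hφrem S h hhS
    have h2 : φ {h} ≤ ⨆ i : α, φ {i} := le_ciSup hsupBdd h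
    linarith
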